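/- Let ν : ℝ → (0,∞) be locally integrable with m(r) := ∫_{−r}^{r} ν(s) ds → ∞ as r → ∞, and suppose ν is bounded with inf ν > 0. Let φ : ℝ → ℝⁿ be bounded and continuous. Then (1/m(r)) ∫_{−r}^{r} ‖φ(s)‖ ν(s) ds → 0 as r → ∞ if and only if for every ε > 0, (1/m(r)) ∫_{M_{r,ε}} ν(s) ds → 0 as r → ∞, where M_{r,ε} = { t ∈ [−r,r] : ‖φ(t)‖ ≥ ε }. -/

import Mathlib

open Filter MeasureTheory

theorem stmt_6 {n : ℕ} (ν : ℝ → ℝ) (φ : ℝ → (Fin n → ℝ))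
    (hνpos : ∀ s, 0 < ν s)
    (hνloc : LocallyIntegrable ν volume)
    (hνbdd : ∃ b : ℝ, ∀ s, ν s ≤ b)
    (hνinf : ∃ a : ℝ, 0 < a ∧ ∀ s, a ≤ ν s)
    (hm : Tendsto (fun r : ℝ => ∫ s in (-r)..r, ν s) atTop atTop)
    (hφc : Continuous φ) (hφb : ∃ C : ℝ, ∀ t, ‖φ t‖ ≤ C) :
    (Tendsto (fun r : ℝ =>
        (∫ s in (-r)..r, ‖φ s‖ * ν s) / (∫ s in (-r)..r, ν s)) atTop (nhds 0))
      ↔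
    (∀ ε : ℝ, 0 < ε →
      Tendsto (fun r : ℝ =>
        (∫ s in (Set.Icc (-r) r ∩ {t : ℝ | ε ≤ ‖φ t‖}), ν s) /
          (∫ s in (-r)..r, ν s)) atTop (nhds 0)) := by
  obtain ⟨C, hC⟩ := hφb
  have hC0 : 0 ≤ C := le_trans (norm_nonneg _) (hC 0)
  have hν0 : ∀ s, 0 ≤ ν s := fun s => (hνpos s).le
  have hνmeas : AEStronglyMeasurable ν volume := hνloc.aestronglyMeasurable
  set g : ℝ → ℝ := fun s => ‖φ s‖ * ν s with hgdef
  have hg0 : ∀ s, 0 ≤ g s := fun s => mul_nonneg (norm_nonneg _) (hν0 s)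
  have hgmeas : AEStronglyMeasurable g volume :=
    (hφc.norm.aestronglyMeasurable).mul hνmeas
  have hνIcc : ∀ r : ℝ, IntegrableOn ν (Set.Icc (-r) r) :=
    fun r => hνloc.integrableOn_isCompact isCompact_Icc
  have hgIcc : ∀ r : ℝ, IntegrableOn g (Set.Icc (-r) r) := by
    intro r
    refine ((hνIcc r).const_mul C).mono' hgmeas.restrict ?_
    filter_upwards with s
    rw [Real.norm_eq_abs, abs_of_nonneg (hg0 s)]
    exact mul_le_mul_of_nonneg_right (hC s) (hν0 s)
  have hS : ∀ ε : ℝ, MeasurableSet {t : ℝ | ε ≤ ‖φ t‖} :=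
    fun ε => (isClosed_le continuous_const hφc.norm).measurableSet
  have hm_pos : ∀ r : ℝ, 0 < r → 0 < ∫ s in (-r)..r, ν s := by
    intro r hr
    exact intervalIntegral.intervalIntegral_pos_of_pos
      ((hνloc.integrableOn_isCompact isCompact_uIcc).intervalIntegrable) hνpos (by linarith)
  have hm_eq : ∀ r : ℝ, 0 < r →
      (∫ s in (-r)..r, ν s) = ∫ s in Set.Ioc (-r) r, ν s :=
    fun r hr => intervalIntegral.integral_of_le (by linarith)
  have hg_eq : ∀ r : ℝ, 0 < r →
      (∫ s in (-r)..r, g s) = ∫ s in Set.Ioc (-r) r, g s :=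
    fun r hr => intervalIntegral.integral_of_le (by linarith)
  constructor
  · intro h ε hε
    have key : ∀ r : ℝ, 0 < r →
        (∫ s in (Set.Icc (-r) r ∩ {t : ℝ | ε ≤ ‖φ t‖}), ν s)
          ≤ ε⁻¹ * ∫ s in (-r)..r, g s := by
      intro r hr
      set M := Set.Icc (-r) r ∩ {t : ℝ | ε ≤ ‖φ t‖} with hMdef
      have hMmeas : MeasurableSet M := measurableSet_Icc.inter (hS ε)
      have hνM : IntegrableOn ν M := (hνIcc r).mono_set Set.inter_subset_left
      have hgM : IntegrableOn g M := (hgIcc r).mono_set Set.inter_subset_left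
      have h1 : ε * (∫ s in M, ν s) ≤ ∫ s in M, g s := by
        rw [← integral_const_mul]
        refine setIntegral_mono_on (hνM.const_mul ε) hgM hMmeas ?_
        intro t ht
        exact mul_le_mul_of_nonneg_right ht.2 (hν0 t)
      have h2 : (∫ s in M, g s) ≤ ∫ s in Set.Icc (-r) r, g s := by
        refine setIntegral_mono_set (hgIcc r) ?_ (HasSubset.Subset.eventuallyLE Set.inter_subset_left)
        filter_upwards with s using hg0 s
      have h3 : (∫ s in Set.Icc (-r) r, g s) = ∫ s in (-r)..r, g s := by
        rw [hg_eq r hr, integral_Icc_eq_integral_Ioc]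
      rw [← h3, inv_mul_eq_div, le_div_iff₀ hε, mul_comm]
      exact h1.trans h2
    have hlim := h.const_mul ε⁻¹
    rw [mul_zero] at hlim
    refine squeeze_zero' ?_ ?_ hlim
    · filter_upwards [eventually_gt_atTop 0] with r hr
      refine div_nonneg (setIntegral_nonneg (measurableSet_Icc.inter (hS ε)) ?_) (hm_pos r hr).le
      intro t _; exact hν0 t
    · filter_upwards [eventually_gt_atTop 0] with r hr
      rw [← mul_div_assoc]
      exact div_le_div_of_nonneg_right (key r hr) (hm_pos r hr).le
  · intro h
    rw [Metric.tendsto_nhds]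
    intro ε hε
    have h2 := (h (ε/2) (by positivity)).const_mul C
    rw [mul_zero] at h2
    have h3 := h2.eventually_lt_const (show (0:ℝ) < ε/2 by positivity)
    filter_upwards [h3, eventually_gt_atTop 0] with r hr3 hr
    have hmr := hm_pos r hr
    set m := ∫ s in (-r)..r, ν s with hmdef
    set I := ∫ s in (Set.Icc (-r) r ∩ {t : ℝ | ε/2 ≤ ‖φ t‖}), ν s with hIdef
    have hI0 : 0 ≤ I := by
      refine setIntegral_nonneg (measurableSet_Icc.inter (hS (ε/2))) ?_
      intro t _; exact hν0 t
    have hJ0 : 0 ≤ ∫ s in (-r)..r, g s := by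
      rw [hg_eq r hr]
      refine setIntegral_nonneg measurableSet_Ioc ?_
      intro t _; exact hg0 t
    -- key inequality : J ≤ C * I + (ε/2) * m
    have key : (∫ s in (-r)..r, g s) ≤ C * I + (ε/2) * m := by
      set S := {t : ℝ | ε/2 ≤ ‖φ t‖} with hSdef
      have hgIoc : IntegrableOn g (Set.Ioc (-r) r) :=
        (hgIcc r).mono_set Set.Ioc_subset_Icc_self
      have hνIoc : IntegrableOn ν (Set.Ioc (-r) r) :=
        (hνIcc r).mono_set Set.Ioc_subset_Icc_self
      have hsplit : (∫ s in (Set.Ioc (-r) r ∩ S), g s)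
          + (∫ s in (Set.Ioc (-r) r \ S), g s) = ∫ s in Set.Ioc (-r) r, g s :=
        integral_inter_add_diff (hS (ε/2)) hgIoc
      have hA : (∫ s in (Set.Ioc (-r) r ∩ S), g s) ≤ C * I := by
        have a1 : (∫ s in (Set.Ioc (-r) r ∩ S), g s)
            ≤ ∫ s in (Set.Ioc (-r) r ∩ S), C * ν s := by
          refine setIntegral_mono_on (hgIoc.mono_set Set.inter_subset_left)
            ((hνIoc.mono_set Set.inter_subset_left).const_mul C)
            (measurableSet_Ioc.inter (hS (ε/2))) ?_
          intro t _
          exact mul_le_mul_of_nonneg_right (hC t) (hν0 t)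
        have a2 : (∫ s in (Set.Ioc (-r) r ∩ S), ν s) ≤ I := by
          refine setIntegral_mono_set ((hνIcc r).mono_set Set.inter_subset_left) ?_
            (HasSubset.Subset.eventuallyLE
              (Set.inter_subset_inter Set.Ioc_subset_Icc_self subset_rfl))
          filter_upwards with s using hν0 s
        calc (∫ s in (Set.Ioc (-r) r ∩ S), g s) ≤ _ := a1
          _ = C * ∫ s in (Set.Ioc (-r) r ∩ S), ν s := integral_const_mul C ν
          _ ≤ C * I := mul_le_mul_of_nonneg_left a2 hC0
      have hB : (∫ s in (Set.Ioc (-r) r \ S), g s) ≤ (ε/2) * m := by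
        have b1 : (∫ s in (Set.Ioc (-r) r \ S), g s)
            ≤ ∫ s in (Set.Ioc (-r) r \ S), (ε/2) * ν s := by
          refine setIntegral_mono_on (hgIoc.mono_set Set.diff_subset)
            ((hνIoc.mono_set Set.diff_subset).const_mul (ε/2))
            (measurableSet_Ioc.diff (hS (ε/2))) ?_
          intro t ht
          have : ¬ (ε/2 ≤ ‖φ t‖) := ht.2
          exact mul_le_mul_of_nonneg_right (le_of_not_ge this) (hν0 t)
        have b2 : (∫ s in (Set.Ioc (-r) r \ S), ν s) ≤ ∫ s in Set.Ioc (-r) r, ν s := by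
          refine setIntegral_mono_set hνIoc ?_
            (HasSubset.Subset.eventuallyLE Set.diff_subset)
          filter_upwards with s using hν0 s
        calc (∫ s in (Set.Ioc (-r) r \ S), g s) ≤ _ := b1
          _ = (ε/2) * ∫ s in (Set.Ioc (-r) r \ S), ν s := integral_const_mul (ε/2) ν
          _ ≤ (ε/2) * m := by
              rw [hmdef, hm_eq r hr]
              exact mul_le_mul_of_nonneg_left b2 (by positivity)
      rw [hg_eq r hr, ← hsplit]
      linarith
    have hfr : (∫ s in (-r)..r, g s) / m ≤ C * (I / m) + ε/2 := by
      rw [div_le_iff₀ hmr]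
      calc (∫ s in (-r)..r, g s) ≤ C * I + (ε/2) * m := key
        _ = (C * (I / m) + ε/2) * m := by field_simp
    rw [Real.dist_eq, sub_zero, abs_of_nonneg (div_nonneg hJ0 hmr.le)]
    linarith
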